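/- arXiv:1205.1854 — 2 statements merged into one kernel-verified Lean document; each statement's English description precedes it below -/
import Mathlib

section
/- For any exponent p with 1 < p < 2 and any vectors ξ, η in ℝ^N not both zero, one has ((|ξ|^{p-2}ξ - |η|^{p-2}η) · (ξ - η)) · (|ξ|^p + |η|^p)^{(2-p)/p} ≥ (p-1) |ξ - η|^2. -/
open Real

-- a^(p-2) * a = a^(p-1), etc.
lemma aux_rpow_mul_self {a q : ℝ} (ha : 0 ≤ a) (hq : q ≠ 0) :
    a ^ (q - 1) * a = a ^ q := by
  rcases eq_or_lt_of_le ha with h | h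
  · rw [← h, mul_zero, Real.zero_rpow hq]
  · rw [← Real.rpow_add_one h.ne' (q - 1)]; ring_nf

-- Bernoulli: for 0 ≤ b ≤ a, 0 < a, 0 < q < 1: q * a^(q-1) * (a - b) ≤ a^q - b^q
lemma aux_bern {a b q : ℝ} (hb : 0 ≤ b) (hba : b ≤ a) (ha : 0 < a)
    (hq0 : 0 < q) (hq1 : q < 1) :
    q * a ^ (q - 1) * (a - b) ≤ a ^ q - b ^ q := by
  have ht : -1 ≤ b / a - 1 := by
    have : 0 ≤ b / a := div_nonneg hb ha.le
    linarith
  have hber := rpow_one_add_le_one_add_mul_self ht (le_of_lt hq0) (le_of_lt hq1)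
  -- (1 + (b/a - 1))^q ≤ 1 + q * (b/a - 1)
  rw [show (1 : ℝ) + (b / a - 1) = b / a by ring] at hber
  have haq : 0 < a ^ q := Real.rpow_pos_of_pos ha q
  have hdiv : (b / a) ^ q = b ^ q / a ^ q := Real.div_rpow hb ha.le q
  rw [hdiv] at hber
  have h2 : b ^ q ≤ a ^ q * (1 + q * (b / a - 1)) := by
    calc b ^ q = a ^ q * (b ^ q / a ^ q) := by field_simp
    _ ≤ a ^ q * (1 + q * (b / a - 1)) := by
        exact mul_le_mul_of_nonneg_left hber haq.le
  have hkey : a ^ q * (1 + q * (b / a - 1)) = a ^ q + q * (a ^ (q - 1)) * (b - a) := by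
    have h3 : a ^ (q - 1) * a = a ^ q := aux_rpow_mul_self ha.le hq0.ne'
    field_simp
    linear_combination q * (a - b) * h3
  rw [hkey] at h2
  linarith

-- (a^2+b^2)^((p-2)/2) ≤ a^(p-2) for a > 0
lemma aux_C_le {a b p : ℝ} (ha : 0 < a) (hb : 0 ≤ b) (hp2 : p < 2) :
    (a ^ 2 + b ^ 2) ^ ((p - 2) / 2) ≤ a ^ (p - 2) := by
  have h1 : (a ^ 2 + b ^ 2) ^ ((p - 2) / 2) ≤ (a ^ 2) ^ ((p - 2) / 2) :=
    Real.rpow_le_rpow_of_nonpos (by positivity) (by nlinarith) (by linarith)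
  have h2 : (a ^ 2) ^ ((p - 2) / 2) = a ^ (p - 2) := by
    rw [← Real.rpow_natCast a 2, ← Real.rpow_mul ha.le]
    congr 1
    push_cast; ring
  linarith [h1, h2.symm.le]

-- endpoint s = ab, assuming b ≤ a
lemma aux_E1' {a b p : ℝ} (hb : 0 ≤ b) (hba : b ≤ a) (hp1 : 1 < p) (hp2 : p < 2)
    (hab : 0 < a ^ 2 + b ^ 2) :
    (p - 1) * (a - b) ^ 2 * (a ^ 2 + b ^ 2) ^ ((p - 2) / 2)
      ≤ (a ^ (p - 1) - b ^ (p - 1)) * (a - b) := by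
  have ha : 0 < a := by nlinarith
  have hC := aux_C_le ha hb hp2
  have hbern := aux_bern hb hba ha (q := p - 1) (by linarith) (by linarith)
  rw [show p - 1 - 1 = p - 2 by ring] at hbern
  have hC' : (p - 1) * (a - b) * (a ^ 2 + b ^ 2) ^ ((p - 2) / 2)
      ≤ (p - 1) * a ^ (p - 2) * (a - b) := by
    have h := mul_le_mul_of_nonneg_left hC
      (mul_nonneg (by linarith) (by linarith) : (0:ℝ) ≤ (p - 1) * (a - b))
    nlinarith [h]
  calc (p - 1) * (a - b) ^ 2 * (a ^ 2 + b ^ 2) ^ ((p - 2) / 2)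
      = ((p - 1) * (a - b) * (a ^ 2 + b ^ 2) ^ ((p - 2) / 2)) * (a - b) := by ring
    _ ≤ ((p - 1) * a ^ (p - 2) * (a - b)) * (a - b) :=
        mul_le_mul_of_nonneg_right hC' (by linarith)
    _ ≤ (a ^ (p - 1) - b ^ (p - 1)) * (a - b) :=
        mul_le_mul_of_nonneg_right hbern (by linarith)

-- endpoint s = ab, general
lemma aux_E1 {a b p : ℝ} (ha : 0 ≤ a) (hb : 0 ≤ b) (hp1 : 1 < p) (hp2 : p < 2)
    (hab : 0 < a ^ 2 + b ^ 2) :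
    (p - 1) * (a - b) ^ 2 * (a ^ 2 + b ^ 2) ^ ((p - 2) / 2)
      ≤ (a ^ (p - 1) - b ^ (p - 1)) * (a - b) := by
  rcases le_total b a with hba | hba
  · exact aux_E1' hb hba hp1 hp2 hab
  · have h := aux_E1' ha hba hp1 hp2 (by nlinarith)
    rw [show b ^ 2 + a ^ 2 = a ^ 2 + b ^ 2 by ring] at h
    nlinarith [h]

-- endpoint s = -ab
lemma aux_E2 {a b p : ℝ} (ha : 0 ≤ a) (hb : 0 ≤ b) (hp1 : 1 < p) (hp2 : p < 2)
    (hab : 0 < a ^ 2 + b ^ 2) :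
    (p - 1) * (a + b) ^ 2 * (a ^ 2 + b ^ 2) ^ ((p - 2) / 2)
      ≤ (a ^ (p - 1) + b ^ (p - 1)) * (a + b) := by
  have haC : a * (a ^ 2 + b ^ 2) ^ ((p - 2) / 2) ≤ a ^ (p - 1) := by
    rcases eq_or_lt_of_le ha with h | h
    · rw [← h, zero_mul, Real.zero_rpow (by intro hh; linarith)]
    · have hC := aux_C_le h hb hp2
      have := mul_le_mul_of_nonneg_left hC h.le
      calc a * (a ^ 2 + b ^ 2) ^ ((p - 2) / 2) ≤ a * a ^ (p - 2) := this
        _ = a ^ (p - 2) * a := by ring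
        _ = a ^ (p - 2 + 1) := by
            rw [← Real.rpow_add_one h.ne' (p - 2)]
        _ = a ^ (p - 1) := by ring_nf
  have hbC : b * (a ^ 2 + b ^ 2) ^ ((p - 2) / 2) ≤ b ^ (p - 1) := by
    rcases eq_or_lt_of_le hb with h | h
    · rw [← h, zero_mul, Real.zero_rpow (by intro hh; linarith)]
    · have hC : (a ^ 2 + b ^ 2) ^ ((p - 2) / 2) ≤ b ^ (p - 2) := by
        have := aux_C_le h ha hp2
        rw [show b ^ 2 + a ^ 2 = a ^ 2 + b ^ 2 by ring] at this
        exact this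
      have := mul_le_mul_of_nonneg_left hC h.le
      calc b * (a ^ 2 + b ^ 2) ^ ((p - 2) / 2) ≤ b * b ^ (p - 2) := this
        _ = b ^ (p - 2) * b := by ring
        _ = b ^ (p - 2 + 1) := by rw [← Real.rpow_add_one h.ne' (p - 2)]
        _ = b ^ (p - 1) := by ring_nf
  have hsum : (a + b) * (a ^ 2 + b ^ 2) ^ ((p - 2) / 2) ≤ a ^ (p - 1) + b ^ (p - 1) := by
    nlinarith [haC, hbC]
  have h1 : (p - 1) * (a + b) ≤ a + b := by nlinarith
  have hS : (0:ℝ) ≤ a ^ (p - 1) + b ^ (p - 1) :=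
    add_nonneg (Real.rpow_nonneg ha _) (Real.rpow_nonneg hb _)
  calc (p - 1) * (a + b) ^ 2 * (a ^ 2 + b ^ 2) ^ ((p - 2) / 2)
      = ((p - 1) * (a + b)) * ((a + b) * (a ^ 2 + b ^ 2) ^ ((p - 2) / 2)) := by ring
    _ ≤ ((p - 1) * (a + b)) * (a ^ (p - 1) + b ^ (p - 1)) :=
        mul_le_mul_of_nonneg_left hsum (mul_nonneg (by linarith) (by linarith))
    _ ≤ (a + b) * (a ^ (p - 1) + b ^ (p - 1)) := mul_le_mul_of_nonneg_right h1 hS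
    _ = (a ^ (p - 1) + b ^ (p - 1)) * (a + b) := by ring

lemma aux_key {a b p s : ℝ} (ha : 0 ≤ a) (hb : 0 ≤ b) (hp1 : 1 < p) (hp2 : p < 2)
    (hab : 0 < a ^ 2 + b ^ 2) (hs1 : -(a * b) ≤ s) (hs2 : s ≤ a * b) :
    (p - 1) * (a ^ 2 + b ^ 2 - 2 * s) * (a ^ 2 + b ^ 2) ^ ((p - 2) / 2)
      ≤ a ^ p + b ^ p - (a ^ (p - 2) + b ^ (p - 2)) * s := by
  have hp1' : p - 1 ≠ 0 := by intro hh; linarith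
  have hp0 : p ≠ 0 := by intro hh; linarith
  have ha1 : a ^ (p - 2) * a = a ^ (p - 1) := by
    have := aux_rpow_mul_self ha (q := p - 1) hp1'
    rwa [show p - 1 - 1 = p - 2 by ring] at this
  have ha2 : a ^ (p - 1) * a = a ^ p := aux_rpow_mul_self ha hp0
  have hb1 : b ^ (p - 2) * b = b ^ (p - 1) := by
    have := aux_rpow_mul_self hb (q := p - 1) hp1'
    rwa [show p - 1 - 1 = p - 2 by ring] at this
  have hb2 : b ^ (p - 1) * b = b ^ p := aux_rpow_mul_self hb hp0
  have hE1 := aux_E1 ha hb hp1 hp2 hab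
  have hE2 := aux_E2 ha hb hp1 hp2 hab
  have e1 : (a ^ (p - 1) - b ^ (p - 1)) * (a - b)
      = a ^ p + b ^ p - (a ^ (p - 2) + b ^ (p - 2)) * (a * b) := by
    linear_combination ha2 + hb2 + b * ha1 + a * hb1
  have e2 : (a ^ (p - 1) + b ^ (p - 1)) * (a + b)
      = a ^ p + b ^ p + (a ^ (p - 2) + b ^ (p - 2)) * (a * b) := by
    linear_combination ha2 + hb2 - b * ha1 - a * hb1
  rw [e1] at hE1
  rw [e2] at hE2
  rcases le_or_gt 0 ((a ^ (p - 2) + b ^ (p - 2)) - 2 * (p - 1) * (a ^ 2 + b ^ 2) ^ ((p - 2) / 2))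
    with hB | hB
  · have h3 := mul_le_mul_of_nonneg_left hs2 hB
    nlinarith [hE1, h3]
  · have h3 := mul_le_mul_of_nonpos_left hs1 hB.le
    nlinarith [hE2, h3]

lemma aux_lp {a b p : ℝ} (ha : 0 ≤ a) (hb : 0 ≤ b) (hp1 : 1 < p) (hp2 : p < 2) :
    (a ^ 2 + b ^ 2) ^ ((2 - p) / 2) ≤ (a ^ p + b ^ p) ^ ((2 - p) / p) := by
  have hp0 : 0 < p := by linarith
  have h := NNReal.rpow_add_rpow_le (p := p) (q := 2) a.toNNReal b.toNNReal hp0 (by linarith)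
  have h' : ((a.toNNReal : ℝ) ^ (2:ℝ) + (b.toNNReal : ℝ) ^ (2:ℝ)) ^ ((1:ℝ)/2)
      ≤ ((a.toNNReal : ℝ) ^ p + (b.toNNReal : ℝ) ^ p) ^ ((1:ℝ)/p) := by
    exact_mod_cast h
  rw [Real.coe_toNNReal a ha, Real.coe_toNNReal b hb] at h'
  have e2 : ∀ x : ℝ, x ^ (2:ℝ) = x ^ 2 := fun x => by
    rw [show (2:ℝ) = ((2:ℕ):ℝ) by norm_num, Real.rpow_natCast]
  rw [e2 a, e2 b] at h'
  have hxnn : (0:ℝ) ≤ (a ^ 2 + b ^ 2) ^ ((1:ℝ)/2) := Real.rpow_nonneg (by positivity) _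
  have hmono := Real.rpow_le_rpow hxnn h' (by linarith : (0:ℝ) ≤ 2 - p)
  rw [← Real.rpow_mul (by positivity : (0:ℝ) ≤ a ^ 2 + b ^ 2),
      ← Real.rpow_mul (by positivity : (0:ℝ) ≤ a ^ p + b ^ p)] at hmono
  rw [show 1 / 2 * (2 - p) = (2 - p) / 2 by ring,
      show 1 / p * (2 - p) = (2 - p) / p by ring] at hmono
  exact hmono

theorem stmt_1 (N : ℕ) (p : ℝ) (hp1 : 1 < p) (hp2 : p < 2)
    (ξ η : EuclideanSpace ℝ (Fin N)) (h : ¬(ξ = 0 ∧ η = 0)) :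
    (p - 1) * ‖ξ - η‖ ^ 2 ≤
      (inner ℝ (‖ξ‖ ^ (p - 2) • ξ - ‖η‖ ^ (p - 2) • η) (ξ - η) : ℝ) *
        (‖ξ‖ ^ p + ‖η‖ ^ p) ^ ((2 - p) / p) := by
  have hp1' : p - 1 ≠ 0 := by intro hh; linarith
  have hp0 : p ≠ 0 := by intro hh; linarith
  set a : ℝ := ‖ξ‖ with ha_def
  set b : ℝ := ‖η‖ with hb_def
  set s : ℝ := (inner ℝ ξ η : ℝ) with hs_def
  have ha : 0 ≤ a := norm_nonneg ξ
  have hb : 0 ≤ b := norm_nonneg η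
  have hab : 0 < a ^ 2 + b ^ 2 := by
    rw [not_and_or] at h
    rcases h with h | h
    · have : 0 < a := by rwa [ha_def, norm_pos_iff]
      nlinarith [sq_nonneg b]
    · have : 0 < b := by rwa [hb_def, norm_pos_iff]
      nlinarith [sq_nonneg a]
  have hcs := abs_real_inner_le_norm ξ η
  have hs2 : s ≤ a * b := le_trans (le_abs_self _) hcs
  have hs1 : -(a * b) ≤ s := by
    have := (abs_le.mp hcs).1
    linarith
  have ha1 : a ^ (p - 2) * a = a ^ (p - 1) := by
    have := aux_rpow_mul_self ha (q := p - 1) hp1'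
    rwa [show p - 1 - 1 = p - 2 by ring] at this
  have ha2 : a ^ (p - 1) * a = a ^ p := aux_rpow_mul_self ha hp0
  have hb1 : b ^ (p - 2) * b = b ^ (p - 1) := by
    have := aux_rpow_mul_self hb (q := p - 1) hp1'
    rwa [show p - 1 - 1 = p - 2 by ring] at this
  have hb2 : b ^ (p - 1) * b = b ^ p := aux_rpow_mul_self hb hp0
  have hinner : (inner ℝ (a ^ (p - 2) • ξ - b ^ (p - 2) • η) (ξ - η) : ℝ)
      = a ^ p + b ^ p - (a ^ (p - 2) + b ^ (p - 2)) * s := by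
    simp only [inner_sub_left, inner_sub_right, real_inner_smul_left]
    rw [real_inner_self_eq_norm_sq ξ, real_inner_self_eq_norm_sq η]
    have hs' : (inner ℝ η ξ : ℝ) = s := by rw [hs_def]; exact real_inner_comm ξ η
    rw [← ha_def, ← hb_def]
    simp only [hs', ← hs_def]
    linear_combination a * ha1 + ha2 + b * hb1 + hb2
  have hnormsub : ‖ξ - η‖ ^ 2 = a ^ 2 - 2 * s + b ^ 2 := by
    rw [norm_sub_sq_real, ha_def, hb_def, hs_def]
  have hkey := aux_key ha hb hp1 hp2 hab hs1 hs2
  rw [← hinner] at hkey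
  set I : ℝ := (inner ℝ (a ^ (p - 2) • ξ - b ^ (p - 2) • η) (ξ - η) : ℝ) with hI_def
  have hCnn : (0:ℝ) ≤ (a ^ 2 + b ^ 2) ^ ((p - 2) / 2) := Real.rpow_nonneg hab.le _
  have hC'nn : (0:ℝ) ≤ (a ^ 2 + b ^ 2) ^ ((2 - p) / 2) := Real.rpow_nonneg hab.le _
  have hlhs_nn : 0 ≤ (p - 1) * (a ^ 2 + b ^ 2 - 2 * s) * (a ^ 2 + b ^ 2) ^ ((p - 2) / 2) := by
    have h1 : 0 ≤ a ^ 2 + b ^ 2 - 2 * s := by nlinarith [sq_nonneg ‖ξ - η‖, hnormsub]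
    have h2 : (0:ℝ) ≤ p - 1 := by linarith
    positivity
  have hIpos : 0 ≤ I := le_trans hlhs_nn hkey
  have hC1 : (a ^ 2 + b ^ 2) ^ ((p - 2) / 2) * (a ^ 2 + b ^ 2) ^ ((2 - p) / 2) = 1 := by
    rw [← Real.rpow_add hab, show (p - 2) / 2 + (2 - p) / 2 = 0 by ring, Real.rpow_zero]
  have hlp := aux_lp ha hb hp1 hp2
  calc (p - 1) * ‖ξ - η‖ ^ 2
      = ((p - 1) * (a ^ 2 + b ^ 2 - 2 * s) * (a ^ 2 + b ^ 2) ^ ((p - 2) / 2))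
          * (a ^ 2 + b ^ 2) ^ ((2 - p) / 2) := by
        rw [hnormsub]
        calc (p - 1) * (a ^ 2 - 2 * s + b ^ 2)
            = (p - 1) * (a ^ 2 - 2 * s + b ^ 2) *
              ((a ^ 2 + b ^ 2) ^ ((p - 2) / 2) * (a ^ 2 + b ^ 2) ^ ((2 - p) / 2)) := by
              rw [hC1]; ring
          _ = (p - 1) * (a ^ 2 + b ^ 2 - 2 * s) * (a ^ 2 + b ^ 2) ^ ((p - 2) / 2)
              * (a ^ 2 + b ^ 2) ^ ((2 - p) / 2) := by ring
    _ ≤ I * (a ^ 2 + b ^ 2) ^ ((2 - p) / 2) := mul_le_mul_of_nonneg_right hkey hC'nn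
    _ ≤ I * (a ^ p + b ^ p) ^ ((2 - p) / p) := mul_le_mul_of_nonneg_left hlp hIpos
end

section
/- Let X be a real Banach space with norm ‖·‖, X₁ a normed space, and j : X → X₁ a compact linear embedding. Suppose X is reflexive and separable with a Schauder basis (e_j), with biorthogonal functionals (e_j*) ⊂ X*, and set Z_k = closure of span{e_j : j ≥ k}. Define β_k = sup{‖j(u)‖_{X₁} : u ∈ Z_k, ‖u‖ = 1}. Then β_k → 0 as k → ∞. -/
open Filter

open Metric NormedSpace in
/-- Core lemma: a bounded sequence with vanishing coordinates, whose image under `j`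
converges, must have image converging to `0` (using reflexivity). -/
lemma core_lemma_stmt12 (X X₁ : Type*) [NormedAddCommGroup X] [NormedSpace ℝ X]
    [NormedAddCommGroup X₁] [NormedSpace ℝ X₁]
    (hrefl : Function.Surjective (NormedSpace.inclusionInDoubleDual ℝ X))
    (j : X →L[ℝ] X₁)
    (e : ℕ → X) (estar : ℕ → StrongDual ℝ X)
    (hbasis : ∀ x : X, Tendsto (fun n => ∑ i ∈ Finset.range n, estar i x • e i)
      atTop (nhds x))
    (z : ℕ → X) (hz : ∀ n, ‖z n‖ ≤ 1)
    (hzero : ∀ i : ℕ, ∀ᶠ n in atTop, estar i (z n) = 0)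
    (v : X₁) (hv : Tendsto (fun n => j (z n)) atTop (nhds v)) : v = 0 := by
  set ι := NormedSpace.inclusionInDoubleDual ℝ X with hι
  set seq : ℕ → WeakDual ℝ (StrongDual ℝ X) := fun n => StrongDual.toWeakDual (ι (z n)) with hseq
  have hmem : ∀ n, seq n ∈ (WeakDual.toStrongDual ⁻¹' closedBall 0 1 :
      Set (WeakDual ℝ (StrongDual ℝ X))) := by
    intro n
    simp only [Set.mem_preimage, mem_closedBall_zero_iff]
    refine (mem_closedBall_zero_iff (a := WeakDual.toStrongDual (seq n))).2 ?_
    calc ‖WeakDual.toStrongDual (seq n)‖ = ‖ι (z n)‖ := rfl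
      _ ≤ ‖z n‖ := NormedSpace.double_dual_bound ℝ X (z n)
      _ ≤ 1 := hz n
  have hScompact : IsCompact (WeakDual.toStrongDual ⁻¹' closedBall 0 1 :
      Set (WeakDual ℝ (StrongDual ℝ X))) := WeakDual.isCompact_closedBall 0 1
  obtain ⟨φ, hφS, hφ⟩ := hScompact.exists_clusterPt
    (f := Filter.map seq atTop) (le_principal_iff.2 (Filter.mem_map.2 (Filter.Eventually.of_forall hmem)))
  -- key property of the cluster point
  have key : ∀ (g : StrongDual ℝ X) (c : ℝ),
      Tendsto (fun n => g (z n)) atTop (nhds c) → φ g = c := by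
    intro g c hg
    have hev : ContinuousAt (fun ψ : WeakDual ℝ (StrongDual ℝ X) => ψ g) φ :=
      (WeakDual.eval_continuous g).continuousAt
    have h1 : ClusterPt (φ g) (Filter.map (fun n => g (z n)) atTop) := by
      refine hφ.map hev ?_
      rw [Filter.tendsto_map'_iff]
      exact Filter.tendsto_map
    exact eq_of_nhds_neBot (h1.mono hg)
  -- use reflexivity
  obtain ⟨u, hu⟩ := hrefl (WeakDual.toStrongDual φ)
  have hφu : ∀ g : StrongDual ℝ X, φ g = g u := by
    intro g
    have : ι u g = g u := NormedSpace.dual_def ℝ X u g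
    rw [← this, hu]; rfl
  -- all coordinates of u vanish
  have hcoord : ∀ i, estar i u = 0 := by
    intro i
    have : Tendsto (fun n => estar i (z n)) atTop (nhds 0) :=
      Tendsto.congr' ((hzero i).mono fun n hn => hn.symm) tendsto_const_nhds
    have := key (estar i) 0 this
    rwa [hφu] at this
  have hu0 : u = 0 := by
    have h1 := hbasis u
    have h2 : (fun n => ∑ i ∈ Finset.range n, estar i u • e i) = fun _ => (0 : X) := by
      funext n; simp [hcoord]
    rw [h2] at h1
    exact tendsto_nhds_unique h1 tendsto_const_nhds
  -- every dual functional vanishes on v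
  have hdual : ∀ f : StrongDual ℝ X₁, f v = 0 := by
    intro f
    have hg : Tendsto (fun n => (f.comp j) (z n)) atTop (nhds (f v)) :=
      ((f.continuous.tendsto v).comp hv)
    have := key (f.comp j) (f v) hg
    rw [hφu] at this
    simp [hu0] at this
    exact this.symm
  exact NormedSpace.eq_zero_of_forall_dual_eq_zero ℝ hdual

theorem stmt_12 (X X₁ : Type*) [NormedAddCommGroup X] [NormedSpace ℝ X] [CompleteSpace X]
    [NormedAddCommGroup X₁] [NormedSpace ℝ X₁]
    (hrefl : Function.Surjective (NormedSpace.inclusionInDoubleDual ℝ X))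
    (j : X →L[ℝ] X₁) (hjcompact : IsCompactOperator j) (hjinj : Function.Injective j)
    (e : ℕ → X) (estar : ℕ → StrongDual ℝ X)
    (hbiorth : ∀ i k : ℕ, estar i (e k) = if i = k then 1 else 0)
    (hbasis : ∀ x : X, Tendsto (fun n => ∑ i ∈ Finset.range n, estar i x • e i)
      atTop (nhds x))
    (Z : ℕ → Set X)
    (hZ : ∀ k, Z k = closure (Submodule.span ℝ (e '' {i | k ≤ i}) : Set X))
    (β : ℕ → ℝ)
    (hβ : ∀ k, β k = sSup {r : ℝ | ∃ u ∈ Z k, ‖u‖ = 1 ∧ r = ‖j u‖}) :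
    Tendsto β atTop (nhds 0) := by
  classical
  set S : ℕ → Set ℝ := fun k => {r : ℝ | ∃ u ∈ Z k, ‖u‖ = 1 ∧ r = ‖j u‖} with hS
  -- Z is antitone
  have hZanti : ∀ m k : ℕ, m ≤ k → Z k ⊆ Z m := by
    intro m k hmk
    rw [hZ, hZ]
    refine closure_mono ?_
    refine SetLike.coe_subset_coe.2 (Submodule.span_mono (Set.image_mono ?_))
    intro i hi
    exact le_trans hmk hi
  -- e k ≠ 0
  have hek : ∀ k, e k ≠ 0 := by
    intro k h
    have := hbiorth k k
    simp [h] at this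
  have hSne : ∀ k, (S k).Nonempty := by
    intro k
    refine ⟨‖j (‖e k‖⁻¹ • e k)‖, ‖e k‖⁻¹ • e k, ?_, ?_, rfl⟩
    · rw [hZ]
      exact subset_closure (Submodule.smul_mem _ _
        (Submodule.subset_span ⟨k, le_refl k, rfl⟩))
    · rw [norm_smul, norm_inv, norm_norm, inv_mul_cancel₀ (norm_ne_zero_iff.2 (hek k))]
  have hSbdd : ∀ k, BddAbove (S k) := by
    intro k
    refine ⟨‖j‖, ?_⟩
    rintro r ⟨u, _, hu1, rfl⟩
    calc ‖j u‖ ≤ ‖j‖ * ‖u‖ := j.le_opNorm u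
      _ = ‖j‖ := by rw [hu1, mul_one]
  have hβnonneg : ∀ k, 0 ≤ β k := by
    intro k
    obtain ⟨r, hr⟩ := hSne k
    have hr0 : 0 ≤ r := by obtain ⟨u, _, _, rfl⟩ := hr; positivity
    rw [hβ]
    exact le_trans hr0 (le_csSup (hSbdd k) hr)
  have hβanti : Antitone β := by
    intro m k hmk
    rw [hβ, hβ]
    refine csSup_le_csSup (hSbdd m) (hSne k) ?_
    rintro r ⟨u, hu, h1, h2⟩
    exact ⟨u, hZanti m k hmk hu, h1, h2⟩
  -- estar i vanishes on Z k for i < k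
  have hvanish : ∀ i k : ℕ, i < k → ∀ x ∈ Z k, estar i x = 0 := by
    intro i k hik x hx
    rw [hZ] at hx
    have h1 : Submodule.span ℝ (e '' {m | k ≤ m}) ≤ LinearMap.ker (estar i : X →ₗ[ℝ] ℝ) := by
      refine Submodule.span_le.2 ?_
      rintro _ ⟨m, hm, rfl⟩
      have hm' : k ≤ m := hm
      have : i ≠ m := by omega
      simp [LinearMap.mem_ker, hbiorth, this]
    have h2 : x ∈ (LinearMap.ker (estar i : X →ₗ[ℝ] ℝ) : Set X) := by
      have := closure_mono (show (Submodule.span ℝ (e '' {m | k ≤ m}) : Set X) ⊆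
        (LinearMap.ker (estar i : X →ₗ[ℝ] ℝ) : Set X) from h1) hx
      rwa [(ContinuousLinearMap.isClosed_ker (estar i)).closure_eq] at this
    exact h2
  -- main convergence: suffices to find small values
  suffices h : ∀ ε > 0, ∃ N, β N < ε by
    rw [Metric.tendsto_atTop]
    intro ε hε
    obtain ⟨N, hN⟩ := h ε hε
    refine ⟨N, fun n hn => ?_⟩
    rw [Real.dist_eq, sub_zero, abs_of_nonneg (hβnonneg n)]
    exact lt_of_le_of_lt (hβanti hn) hN
  by_contra hcon
  push_neg at hcon
  obtain ⟨ε, hε, hεβ⟩ := hcon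
  -- pick almost-maximizers
  have hpick : ∀ k, ∃ u, u ∈ Z k ∧ ‖u‖ = 1 ∧ ε / 2 < ‖j u‖ := by
    intro k
    have h1 : ε / 2 < sSup (S k) := by
      rw [← hβ]; linarith [hεβ k]
    obtain ⟨r, hrS, hr⟩ := exists_lt_of_lt_csSup (hSne k) h1
    obtain ⟨u, hu, h2, h3⟩ := hrS
    exact ⟨u, hu, h2, h3 ▸ hr⟩
  choose u huZ hunorm hjbig using hpick
  -- compactness of j
  have hK : IsCompact (closure ((j : X →ₗ[ℝ] X₁) '' Metric.closedBall 0 1)) :=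
    IsCompactOperator.isCompact_closure_image_closedBall (𝕜₁ := ℝ) hjcompact 1
  have hmemK : ∀ n, j (u n) ∈ closure ((j : X →ₗ[ℝ] X₁) '' Metric.closedBall 0 1) := by
    intro n
    exact subset_closure ⟨u n, by simp [Metric.mem_closedBall, hunorm n], rfl⟩
  obtain ⟨v, hvK, ψ, hψ, hvt⟩ := hK.tendsto_subseq hmemK
  -- v has norm ≥ ε/2
  have hvnorm : ε / 2 ≤ ‖v‖ := by
    have h1 : Tendsto (fun n => ‖j (u (ψ n))‖) atTop (nhds ‖v‖) :=
      (continuous_norm.tendsto v).comp hvt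
    exact le_of_tendsto_of_tendsto' tendsto_const_nhds h1
      (fun n => le_of_lt (hjbig (ψ n)))
  -- apply the core lemma
  have hv0 : v = 0 := by
    refine core_lemma_stmt12 X X₁ hrefl j e estar hbasis (fun n => u (ψ n))
      (fun n => le_of_eq (hunorm (ψ n))) ?_ v hvt
    intro i
    filter_upwards [Filter.eventually_ge_atTop (i + 1)] with n hn
    have h1 : i < ψ n := lt_of_lt_of_le (Nat.lt_of_lt_of_le (Nat.lt_succ_self i) hn)
      (hψ.le_apply)
    exact hvanish i (ψ n) h1 (u (ψ n)) (huZ (ψ n))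
  rw [hv0] at hvnorm
  simp at hvnorm
  linarith
end
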